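/- In the Euclidean plane (EuclideanSpace ℝ (Fin 2)), let c₁, c₂, c₃ be the vertices of an equilateral triangle of side length s, and let r > 0 satisfy 0 < s < 2·r and s ≠ r·√3. Then each of the three pairwise intersections of the circles of radius r centered at c₁, c₂, c₃ consists of exactly two points, these three two-point intersections are pairwise disjoint, and hence the union of the three circles contains exactly six points lying on more than one of the circles. (This is the paper's claim that the triangular projection figure of three equal circles has exactly six intersection points.) -/

import Mathlib

private lemma sqrt_eq_iff'' {A r : ℝ} (hA : 0 ≤ A) (hr : 0 ≤ r) :
    Real.sqrt A = r ↔ A = r ^ 2 := by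
  constructor
  · intro h; rw [← h, Real.sq_sqrt hA]
  · intro h; rw [h, Real.sqrt_sq hr]

private lemma mem_sphere_iff' {r : ℝ} (hr : 0 < r) (x c : EuclideanSpace ℝ (Fin 2)) :
    x ∈ Metric.sphere c r ↔ (x 0 - c 0)^2 + (x 1 - c 1)^2 = r^2 := by
  rw [Metric.mem_sphere, EuclideanSpace.dist_eq, Fin.sum_univ_two,
      Real.dist_eq, Real.dist_eq, sq_abs, sq_abs, sqrt_eq_iff'' (by positivity) hr.le]

private lemma eq_iff' (x y : EuclideanSpace ℝ (Fin 2)) :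
    x = y ↔ x 0 = y 0 ∧ x 1 = y 1 := by
  constructor
  · rintro rfl; exact ⟨rfl, rfl⟩
  · rintro ⟨h0, h1⟩; ext i; fin_cases i <;> simpa

private lemma key_alg2 (u w a b d k : ℝ) (hd : 0 < d)
    (hd2 : a^2 + b^2 = d^2)
    (lin : u*a + w*b = 0)
    (norm2 : u^2 + w^2 = k^2 * d^2) :
    (u = -(k*b) ∧ w = k*a) ∨ (u = k*b ∧ w = -(k*a)) := by
  have hd0 : d ≠ 0 := ne_of_gt hd
  have hd20 : d^2 ≠ 0 := pow_ne_zero 2 hd0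
  have hu : u * d^2 = -((a*w - b*u) * b) := by linear_combination a*lin - u*hd2
  have hw : w * d^2 = (a*w - b*u) * a := by linear_combination b*lin - w*hd2
  have hT2 : ((a*w - b*u) - k*d^2) * ((a*w - b*u) + k*d^2) = 0 := by
    linear_combination (u^2+w^2)*hd2 + d^2*norm2 - (u*a+w*b)*lin
  rcases mul_eq_zero.mp hT2 with h' | h'
  · left
    exact ⟨mul_right_cancel₀ hd20 (by linear_combination hu - b*h'),
           mul_right_cancel₀ hd20 (by linear_combination hw + a*h')⟩
  · right
    exact ⟨mul_right_cancel₀ hd20 (by linear_combination hu - b*h'),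
           mul_right_cancel₀ hd20 (by linear_combination hw + a*h')⟩

private lemma key_alg (x0 x1 A0 A1 B0 B1 d r k : ℝ) (hd : 0 < d)
    (hd2 : (B0 - A0)^2 + (B1 - A1)^2 = d^2)
    (hk2 : k^2 * d^2 = r^2 - d^2/4)
    (e1 : (x0 - A0)^2 + (x1 - A1)^2 = r^2)
    (e2 : (x0 - B0)^2 + (x1 - B1)^2 = r^2) :
    (x0 = (A0+B0)/2 - k*(B1-A1) ∧ x1 = (A1+B1)/2 + k*(B0-A0)) ∨
    (x0 = (A0+B0)/2 + k*(B1-A1) ∧ x1 = (A1+B1)/2 - k*(B0-A0)) := by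
  have lin : (x0 - (A0+B0)/2)*(B0-A0) + (x1 - (A1+B1)/2)*(B1-A1) = 0 := by
    linear_combination (e1 - e2)/2
  have norm2 : (x0 - (A0+B0)/2)^2 + (x1 - (A1+B1)/2)^2 = k^2 * d^2 := by
    linear_combination e1 - lin - (1/4) * hd2 - hk2
  rcases key_alg2 _ _ _ _ _ _ hd hd2 lin norm2 with ⟨h1, h2⟩ | ⟨h1, h2⟩
  · exact Or.inl ⟨by linarith, by linarith⟩
  · exact Or.inr ⟨by linarith, by linarith⟩

private lemma two_circles (c₁ c₂ : EuclideanSpace ℝ (Fin 2)) (d r : ℝ)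
    (hd : 0 < d) (hr : 0 < r) (hlt : d < 2 * r) (hdist : dist c₁ c₂ = d) :
    ∃ p q : EuclideanSpace ℝ (Fin 2), p ≠ q ∧
      Metric.sphere c₁ r ∩ Metric.sphere c₂ r = {p, q} := by
  have hd2 : (c₂ 0 - c₁ 0)^2 + (c₂ 1 - c₁ 1)^2 = d^2 := by
    have h0 : (c₁ 0 - c₂ 0)^2 + (c₁ 1 - c₂ 1)^2 = d^2 := by
      rw [← sqrt_eq_iff'' (by positivity) hd.le, ← Fin.sum_univ_two
        (f := fun i => (c₁ i - c₂ i)^2)]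
      rw [EuclideanSpace.dist_eq] at hdist
      simpa [Real.dist_eq, sq_abs] using hdist
    linear_combination h0
  have hpos : 0 < r^2 - d^2/4 := by nlinarith
  obtain ⟨k, hk, hk2⟩ : ∃ k : ℝ, 0 < k ∧ k^2 * d^2 = r^2 - d^2/4 := by
    refine ⟨Real.sqrt (r^2 - d^2/4) / d, div_pos (Real.sqrt_pos.mpr hpos) hd, ?_⟩
    rw [div_pow, div_mul_cancel₀ _ (pow_ne_zero 2 (ne_of_gt hd))]
    exact Real.sq_sqrt hpos.le
  refine ⟨!₂[(c₁ 0 + c₂ 0)/2 - k*(c₂ 1 - c₁ 1), (c₁ 1 + c₂ 1)/2 + k*(c₂ 0 - c₁ 0)],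
    !₂[(c₁ 0 + c₂ 0)/2 + k*(c₂ 1 - c₁ 1), (c₁ 1 + c₂ 1)/2 - k*(c₂ 0 - c₁ 0)], ?_, ?_⟩
  · intro h
    rw [eq_iff'] at h
    simp only [PiLp.toLp_apply, Matrix.cons_val_zero, Matrix.cons_val_one, Matrix.head_cons] at h
    obtain ⟨h0, h1⟩ := h
    have hb0 : c₂ 1 - c₁ 1 = 0 := by nlinarith
    have ha0 : c₂ 0 - c₁ 0 = 0 := by nlinarith
    nlinarith
  · ext x
    simp only [Set.mem_inter_iff, mem_sphere_iff' hr, Set.mem_insert_iff,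
      Set.mem_singleton_iff, eq_iff', PiLp.toLp_apply, Matrix.cons_val_zero, Matrix.cons_val_one,
      Matrix.head_cons]
    constructor
    · rintro ⟨e1, e2⟩
      exact key_alg (x 0) (x 1) (c₁ 0) (c₁ 1) (c₂ 0) (c₂ 1) d r k hd hd2 hk2 e1 e2
    · rintro (⟨h0, h1⟩ | ⟨h0, h1⟩) <;> rw [h0, h1] <;>
        constructor <;> linear_combination (1/4)*hd2 + k^2*hd2 + hk2

private lemma gram_alg (u0 u1 v0 v1 w0 w1 s r : ℝ)
    (hs : 0 < s)
    (hu : u0^2 + u1^2 = r^2) (hv : v0^2 + v1^2 = r^2) (hw : w0^2 + w1^2 = r^2)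
    (huv : (u0-v0)^2 + (u1-v1)^2 = s^2)
    (hvw : (v0-w0)^2 + (v1-w1)^2 = s^2)
    (hwu : (w0-u0)^2 + (w1-u1)^2 = s^2) :
    s^2 = 3*r^2 := by
  have e12 : u0*v0 + u1*v1 = r^2 - s^2/2 := by linear_combination (hu + hv - huv)/2
  have e23 : v0*w0 + v1*w1 = r^2 - s^2/2 := by linear_combination (hv + hw - hvw)/2
  have e31 : u0*w0 + u1*w1 = r^2 - s^2/2 := by linear_combination (hw + hu - hwu)/2
  have gram : (u0^2+u1^2)*((v0^2+v1^2)*(w0^2+w1^2) - (v0*w0+v1*w1)^2)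
      - (u0*v0+u1*v1)*((u0*v0+u1*v1)*(w0^2+w1^2) - (u0*w0+u1*w1)*(v0*w0+v1*w1))
      + (u0*w0+u1*w1)*((u0*v0+u1*v1)*(v0*w0+v1*w1) - (u0*w0+u1*w1)*(v0^2+v1^2)) = 0 := by
    ring
  rw [hu, hv, hw, e12, e23, e31] at gram
  have h4 : s^2*s^2*(3*r^2 - s^2) = 0 := by linear_combination 4*gram
  have hs4 : s^2*s^2 > 0 := by positivity
  rcases mul_eq_zero.mp h4 with h' | h'
  · exact absurd h' (ne_of_gt hs4)
  · linarith

private lemma no_common (c₁ c₂ c₃ x : EuclideanSpace ℝ (Fin 2)) (s r : ℝ)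
    (hs : 0 < s) (hr : 0 < r) (hne : s ≠ r * Real.sqrt 3)
    (h₁₂ : dist c₁ c₂ = s) (h₂₃ : dist c₂ c₃ = s) (h₃₁ : dist c₃ c₁ = s)
    (d1 : x ∈ Metric.sphere c₁ r) (d2 : x ∈ Metric.sphere c₂ r)
    (d3 : x ∈ Metric.sphere c₃ r) : False := by
  have coord : ∀ y z : EuclideanSpace ℝ (Fin 2), ∀ t : ℝ, 0 ≤ t → dist y z = t →
      (y 0 - z 0)^2 + (y 1 - z 1)^2 = t^2 := by
    intro y z t ht h
    rw [← sqrt_eq_iff'' (by positivity) ht, ← Fin.sum_univ_two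
      (f := fun i => (y i - z i)^2)]
    rw [EuclideanSpace.dist_eq] at h
    simpa [Real.dist_eq, sq_abs] using h
  rw [Metric.mem_sphere] at d1 d2 d3
  have hu := coord x c₁ r hr.le d1
  have hv := coord x c₂ r hr.le d2
  have hw := coord x c₃ r hr.le d3
  have huv : ((x 0 - c₁ 0) - (x 0 - c₂ 0))^2 + ((x 1 - c₁ 1) - (x 1 - c₂ 1))^2 = s^2 := by
    have := coord c₂ c₁ s hs.le (by rwa [dist_comm])
    linear_combination this
  have hvw : ((x 0 - c₂ 0) - (x 0 - c₃ 0))^2 + ((x 1 - c₂ 1) - (x 1 - c₃ 1))^2 = s^2 := by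
    have := coord c₃ c₂ s hs.le (by rwa [dist_comm])
    linear_combination this
  have hwu : ((x 0 - c₃ 0) - (x 0 - c₁ 0))^2 + ((x 1 - c₃ 1) - (x 1 - c₁ 1))^2 = s^2 := by
    have := coord c₁ c₃ s hs.le (by rwa [dist_comm])
    linear_combination this
  have hsq : s^2 = 3*r^2 :=
    gram_alg (x 0 - c₁ 0) (x 1 - c₁ 1) (x 0 - c₂ 0) (x 1 - c₂ 1)
      (x 0 - c₃ 0) (x 1 - c₃ 1) s r hs hu hv hw huv hvw hwu
  apply hne
  have h3 : Real.sqrt 3 ^ 2 = 3 := Real.sq_sqrt (by norm_num)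
  have hfac : (s - r*Real.sqrt 3)*(s + r*Real.sqrt 3) = 0 := by
    linear_combination hsq - r^2*h3
  rcases mul_eq_zero.mp hfac with h' | h'
  · linarith
  · have hnn : (0:ℝ) ≤ Real.sqrt 3 := Real.sqrt_nonneg 3
    nlinarith

/-- For three equal circles of radius r centered at the vertices of an equilateral triangle
of side s with 0 < s < 2r and s ≠ r√3: each pairwise intersection has exactly two points,
the three intersections are pairwise disjoint, and exactly six points of the union lie on
more than one of the circles. -/
theorem triangular_configuration_six_intersection_points
    (c₁ c₂ c₃ : EuclideanSpace ℝ (Fin 2)) (s r : ℝ)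
    (hs : 0 < s) (hr : 0 < r) (hlt : s < 2 * r) (hne : s ≠ r * Real.sqrt 3)
    (h₁₂ : dist c₁ c₂ = s) (h₂₃ : dist c₂ c₃ = s) (h₃₁ : dist c₃ c₁ = s) :
    (∃ p q : EuclideanSpace ℝ (Fin 2), p ≠ q ∧
        Metric.sphere c₁ r ∩ Metric.sphere c₂ r = {p, q}) ∧
    (∃ p q : EuclideanSpace ℝ (Fin 2), p ≠ q ∧
        Metric.sphere c₂ r ∩ Metric.sphere c₃ r = {p, q}) ∧
    (∃ p q : EuclideanSpace ℝ (Fin 2), p ≠ q ∧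
        Metric.sphere c₃ r ∩ Metric.sphere c₁ r = {p, q}) ∧
    Disjoint (Metric.sphere c₁ r ∩ Metric.sphere c₂ r)
      (Metric.sphere c₂ r ∩ Metric.sphere c₃ r) ∧
    Disjoint (Metric.sphere c₂ r ∩ Metric.sphere c₃ r)
      (Metric.sphere c₃ r ∩ Metric.sphere c₁ r) ∧
    Disjoint (Metric.sphere c₁ r ∩ Metric.sphere c₂ r)
      (Metric.sphere c₃ r ∩ Metric.sphere c₁ r) ∧
    Set.ncard {x ∈ Metric.sphere c₁ r ∪ Metric.sphere c₂ r ∪ Metric.sphere c₃ r |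
        (x ∈ Metric.sphere c₁ r ∧ x ∈ Metric.sphere c₂ r) ∨
        (x ∈ Metric.sphere c₂ r ∧ x ∈ Metric.sphere c₃ r) ∨
        (x ∈ Metric.sphere c₃ r ∧ x ∈ Metric.sphere c₁ r)} = 6 := by
  obtain ⟨p₁, q₁, hpq₁, hA⟩ := two_circles c₁ c₂ s r hs hr hlt h₁₂
  obtain ⟨p₂, q₂, hpq₂, hB⟩ := two_circles c₂ c₃ s r hs hr hlt h₂₃
  obtain ⟨p₃, q₃, hpq₃, hC⟩ := two_circles c₃ c₁ s r hs hr hlt h₃₁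
  have hdAB : Disjoint (Metric.sphere c₁ r ∩ Metric.sphere c₂ r)
      (Metric.sphere c₂ r ∩ Metric.sphere c₃ r) := by
    rw [Set.disjoint_left]
    rintro x ⟨hx1, hx2⟩ ⟨hx2', hx3⟩
    exact no_common c₁ c₂ c₃ x s r hs hr hne h₁₂ h₂₃ h₃₁ hx1 hx2 hx3
  have hdBC : Disjoint (Metric.sphere c₂ r ∩ Metric.sphere c₃ r)
      (Metric.sphere c₃ r ∩ Metric.sphere c₁ r) := by
    rw [Set.disjoint_left]
    rintro x ⟨hx2, hx3⟩ ⟨hx3', hx1⟩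
    exact no_common c₁ c₂ c₃ x s r hs hr hne h₁₂ h₂₃ h₃₁ hx1 hx2 hx3
  have hdAC : Disjoint (Metric.sphere c₁ r ∩ Metric.sphere c₂ r)
      (Metric.sphere c₃ r ∩ Metric.sphere c₁ r) := by
    rw [Set.disjoint_left]
    rintro x ⟨hx1, hx2⟩ ⟨hx3, hx1'⟩
    exact no_common c₁ c₂ c₃ x s r hs hr hne h₁₂ h₂₃ h₃₁ hx1 hx2 hx3
  refine ⟨⟨p₁, q₁, hpq₁, hA⟩, ⟨p₂, q₂, hpq₂, hB⟩, ⟨p₃, q₃, hpq₃, hC⟩,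
    hdAB, hdBC, hdAC, ?_⟩
  have hset : {x ∈ Metric.sphere c₁ r ∪ Metric.sphere c₂ r ∪ Metric.sphere c₃ r |
        (x ∈ Metric.sphere c₁ r ∧ x ∈ Metric.sphere c₂ r) ∨
        (x ∈ Metric.sphere c₂ r ∧ x ∈ Metric.sphere c₃ r) ∨
        (x ∈ Metric.sphere c₃ r ∧ x ∈ Metric.sphere c₁ r)} =
      (Metric.sphere c₁ r ∩ Metric.sphere c₂ r) ∪
      ((Metric.sphere c₂ r ∩ Metric.sphere c₃ r) ∪
       (Metric.sphere c₃ r ∩ Metric.sphere c₁ r)) := by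
    ext x
    simp only [Set.mem_setOf_eq, Set.mem_union, Set.mem_inter_iff]
    tauto
  rw [hset]
  have hfinA : (Metric.sphere c₁ r ∩ Metric.sphere c₂ r).Finite := by
    rw [hA]; exact (Set.finite_singleton q₁).insert p₁
  have hfinB : (Metric.sphere c₂ r ∩ Metric.sphere c₃ r).Finite := by
    rw [hB]; exact (Set.finite_singleton q₂).insert p₂
  have hfinC : (Metric.sphere c₃ r ∩ Metric.sphere c₁ r).Finite := by
    rw [hC]; exact (Set.finite_singleton q₃).insert p₃
  rw [Set.ncard_union_eq (Set.disjoint_union_right.mpr ⟨hdAB, hdAC⟩) hfinA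
      (hfinB.union hfinC),
    Set.ncard_union_eq hdBC hfinB hfinC, hA, hB, hC,
    Set.ncard_pair hpq₁, Set.ncard_pair hpq₂, Set.ncard_pair hpq₃]
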